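/- Let G be a connected planar directed graph with edge partition E = C ∪ I and connection matrix M = (1/2) B P A as above. A row vector ψ ∈ R^F satisfies ψ^T M = 0 if and only if ψ^T B is a linear combination of signed loop vectors of cycles whose edges lie entirely in C or entirely in I (together with the trivial all-ones vector in the left kernel of B). -/

import Mathlib

open Matrix

/-- `b` is the signed loop vector of a closed walk all of whose edges satisfy
the predicate `good`. -/
def IsHomLoopVec {E V : Type*} [Fintype E] [DecidableEq E]
    (src tgt : E → V) (good : E → Prop) (b : E → ℝ) : Prop :=
  ∃ (n : ℕ) (vs : Fin (n + 1) → V) (es : Fin n → E) (sgn : Fin n → ℝ),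
    vs (Fin.last n) = vs 0 ∧
    (∀ i : Fin n,
      (sgn i = 1 ∧ src (es i) = vs i.castSucc ∧ tgt (es i) = vs i.succ) ∨
      (sgn i = -1 ∧ tgt (es i) = vs i.castSucc ∧ src (es i) = vs i.succ)) ∧
    (∀ i : Fin n, good (es i)) ∧
    b = fun e => ∑ i : Fin n, if es i = e then sgn i else 0

section Aux

variable {E V : Type*} [Fintype E] [Fintype V] [DecidableEq E] [DecidableEq V]

/-- Every homogeneous loop vector is a flow: `bᵀ A = 0` by telescoping. -/
lemma homLoop_flow (src tgt : E → V) (A : Matrix E V ℝ)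
    (hA : ∀ e v, A e v = (if tgt e = v then 1 else 0) - (if src e = v then 1 else 0))
    (good : E → Prop) (b : E → ℝ) (hb : IsHomLoopVec src tgt good b) :
    Matrix.vecMul b A = 0 := by
  classical
  obtain ⟨n, vs, es, sgn, hclose, hdir, -, hbdef⟩ := hb
  funext v
  simp only [Matrix.vecMul, dotProduct, hbdef, Pi.zero_apply]
  have hswap : ∀ e : E, (∑ i : Fin n, if es i = e then sgn i else 0) * A e v
      = ∑ i : Fin n, (if es i = e then sgn i * A e v else 0) := by
    intro e
    rw [Finset.sum_mul]
    refine Finset.sum_congr rfl fun i _ => ?_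
    split_ifs <;> simp
  rw [Finset.sum_congr rfl fun e _ => hswap e, Finset.sum_comm]
  have hinner : ∀ i : Fin n,
      (∑ e : E, if es i = e then sgn i * A e v else 0) = sgn i * A (es i) v := by
    intro i
    rw [Finset.sum_ite_eq]
    simp
  rw [Finset.sum_congr rfl fun i _ => hinner i]
  have key : ∀ i : Fin n, sgn i * A (es i) v =
      (if vs i.succ = v then (1:ℝ) else 0) - (if vs i.castSucc = v then 1 else 0) := by
    intro i
    rcases hdir i with ⟨h1, h2, h3⟩ | ⟨h1, h2, h3⟩ <;>
      rw [hA, h1, h2, h3] <;> ring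
  rw [Finset.sum_congr rfl fun i _ => key i, Finset.sum_sub_distrib]
  have h1 := Fin.sum_univ_succ (fun j : Fin (n+1) => if vs j = v then (1:ℝ) else 0)
  have h2 := Fin.sum_univ_castSucc (fun j : Fin (n+1) => if vs j = v then (1:ℝ) else 0)
  have h3 : (if vs (Fin.last n) = v then (1:ℝ) else 0) = (if vs 0 = v then 1 else 0) := by
    rw [hclose]
  linarith

/-- The support of a homogeneous loop vector consists of good edges. -/
lemma homLoop_supp (src tgt : E → V) (good : E → Prop) (b : E → ℝ)
    (hb : IsHomLoopVec src tgt good b) : ∀ e, b e ≠ 0 → good e := by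
  classical
  obtain ⟨n, vs, es, sgn, -, -, hgood, hbdef⟩ := hb
  intro e he
  by_contra hg
  apply he
  rw [hbdef]
  refine Finset.sum_eq_zero fun i _ => ?_
  rw [if_neg]
  intro h
  exact hg (h ▸ hgood i)

/-- Flow decomposition: any flow supported on good edges is a linear combination
of homogeneous loop vectors with good edges. Induction on the support size. -/
lemma flow_decomp (src tgt : E → V) (A : Matrix E V ℝ)
    (hA : ∀ e v, A e v = (if tgt e = v then 1 else 0) - (if src e = v then 1 else 0))
    (good : E → Prop) :
    ∀ (n : ℕ) (x : E → ℝ),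
      (Finset.univ.filter (fun e => x e ≠ 0)).card ≤ n →
      (∀ e, x e ≠ 0 → good e) → Matrix.vecMul x A = 0 →
      x ∈ Submodule.span ℝ {b : E → ℝ | IsHomLoopVec src tgt good b} := by
  classical
  intro n
  induction n with
  | zero =>
    intro x hcard hsupp hflow
    have hx : x = 0 := by
      funext e
      show x e = 0
      by_contra h
      have : e ∈ Finset.univ.filter (fun e => x e ≠ 0) := by simp [h]
      have := Finset.card_pos.mpr ⟨e, this⟩
      omega
    rw [hx]
    exact Submodule.zero_mem _
  | succ n ih =>
    intro x hcard hsupp hflow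
    by_cases hx0 : x = 0
    · rw [hx0]; exact Submodule.zero_mem _
    -- key claim : there is a homogeneous loop vector inside the support of x
    suffices h : ∃ b : E → ℝ, IsHomLoopVec src tgt good b ∧
        (∀ e, b e ≠ 0 → x e ≠ 0) ∧ ∃ e₀, b e₀ ≠ 0 by
      obtain ⟨b, hbloop, hbsupp, e₀, hbe₀⟩ := h
      have hxe₀ : x e₀ ≠ 0 := hbsupp e₀ hbe₀
      set c : ℝ := x e₀ / b e₀ with hc
      set y : E → ℝ := x - c • b with hy
      have hye₀ : y e₀ = 0 := by
        simp only [hy, hc, Pi.sub_apply, Pi.smul_apply, smul_eq_mul]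
        field_simp
        ring
      have hysub : ∀ e, y e ≠ 0 → x e ≠ 0 := by
        intro e h hxe
        apply h
        have hbe : b e = 0 := by
          by_contra hb'
          exact hbsupp e hb' hxe
        simp [hy, hbe, hxe]
      have hsubset : Finset.univ.filter (fun e => y e ≠ 0) ⊂
          Finset.univ.filter (fun e => x e ≠ 0) := by
        constructor
        · intro e he
          simp only [Finset.mem_filter, Finset.mem_univ, true_and] at he ⊢
          exact hysub e he
        · intro hcon
          have := hcon (by simp [hxe₀] : e₀ ∈ Finset.univ.filter (fun e => x e ≠ 0))
          simp only [Finset.mem_filter] at this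
          exact this.2 hye₀
      have hycard : (Finset.univ.filter (fun e => y e ≠ 0)).card ≤ n := by
        have := Finset.card_lt_card hsubset
        omega
      have hygood : ∀ e, y e ≠ 0 → good e := fun e he => hsupp e (hysub e he)
      have hyflow : Matrix.vecMul y A = 0 := by
        have hbflow := homLoop_flow src tgt A hA good b hbloop
        rw [hy, Matrix.sub_vecMul, Matrix.smul_vecMul, hbflow, hflow]
        simp
      have hymem := ih y hycard hygood hyflow
      have hbmem : b ∈ Submodule.span ℝ {b : E → ℝ | IsHomLoopVec src tgt good b} :=
        Submodule.subset_span hbloop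
      have hxeq : x = y + c • b := by
        rw [hy, sub_add_cancel]
      rw [hxeq]
      exact Submodule.add_mem _ hymem (Submodule.smul_mem _ c hbmem)
    -- now construct the loop vector
    by_cases hsl : ∃ e, x e ≠ 0 ∧ src e = tgt e
    · -- a self-loop in the support
      obtain ⟨e, hxe, hee⟩ := hsl
      refine ⟨fun e' => if e = e' then 1 else 0, ?_, ?_, e, by simp⟩
      · refine ⟨1, fun _ => src e, fun _ => e, fun _ => 1, rfl, ?_, fun _ => hsupp e hxe, ?_⟩
        · intro i
          exact Or.inl ⟨rfl, rfl, hee.symm⟩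
        · funext e'
          simp
      · intro e' h
        have : e = e' := by
          by_contra hne
          simp [hne] at h
        rwa [← this]
    · push_neg at hsl
      -- all support edges have distinct endpoints; orient them along the flow.
      set hd : E → V := fun e => if 0 < x e then tgt e else src e with hhd
      set tl : E → V := fun e => if 0 < x e then src e else tgt e with htl
      -- flow conservation: every head vertex is also a tail vertex
      have step : ∀ v : V, (∃ e, x e ≠ 0 ∧ hd e = v) → ∃ e, x e ≠ 0 ∧ tl e = v := by
        intro v ⟨e₁, he₁, hhd₁⟩
        by_contra hno
        push_neg at hno
        have h0 : (∑ e : E, x e * A e v) = 0 := by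
          have := congrFun hflow v
          simpa [Matrix.vecMul, dotProduct] using this
        have hnn : ∀ e ∈ Finset.univ, (0:ℝ) ≤ x e * A e v := by
          intro e _
          by_cases hxe : x e = 0
          · simp [hxe]
          · have hst := hsl e hxe
            have htle := hno e hxe
            rw [hA]
            rcases lt_or_gt_of_ne hxe with hneg | hpos
            · have h1 : tl e = tgt e := by simp [htl, not_lt.mpr hneg.le]
              have h2 : tgt e ≠ v := by rw [← h1]; exact htle
              simp only [if_neg h2]
              split_ifs <;> nlinarith
            · have h1 : tl e = src e := by simp [htl, hpos]
              have h2 : src e ≠ v := by rw [← h1]; exact htle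
              simp only [if_neg h2]
              split_ifs <;> nlinarith
        have hpos : (0:ℝ) < x e₁ * A e₁ v := by
          have hst := hsl e₁ he₁
          rw [hA]
          rcases lt_or_gt_of_ne he₁ with hneg | hpos
          · have h1 : hd e₁ = src e₁ := by simp [hhd, not_lt.mpr hneg.le]
            have h2 : src e₁ = v := by rw [← h1]; exact hhd₁
            have h3 : tgt e₁ ≠ v := by rw [← h2]; exact fun h => hst h.symm
            rw [if_pos h2, if_neg h3]
            nlinarith
          · have h1 : hd e₁ = tgt e₁ := by simp [hhd, hpos]
            have h2 : tgt e₁ = v := by rw [← h1]; exact hhd₁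
            have h3 : src e₁ ≠ v := by rw [← h2]; exact hst
            rw [if_pos h2, if_neg h3]
            nlinarith
        have : (0:ℝ) < ∑ e : E, x e * A e v :=
          Finset.sum_pos' hnn ⟨e₁, Finset.mem_univ _, hpos⟩
        linarith
      -- build an infinite walk backwards-forwards through the support
      obtain ⟨e0, he0⟩ : ∃ e, x e ≠ 0 := by
        by_contra hcon
        push_neg at hcon
        exact hx0 (funext fun e => hcon e)
      have step' : ∀ e : E, x e ≠ 0 → ∃ e', x e' ≠ 0 ∧ tl e' = hd e :=
        fun e he => step (hd e) ⟨e, he, rfl⟩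
      set f : {e : E // x e ≠ 0} → {e : E // x e ≠ 0} :=
        fun p => ⟨Classical.choose (step' p.1 p.2), (Classical.choose_spec (step' p.1 p.2)).1⟩
        with hf
      have hfspec : ∀ p : {e : E // x e ≠ 0}, tl (f p).1 = hd p.1 :=
        fun p => (Classical.choose_spec (step' p.1 p.2)).2
      set wp : ℕ → {e : E // x e ≠ 0} := fun n => f^[n] ⟨e0, he0⟩ with hwp
      set w : ℕ → E := fun n => (wp n).1 with hwdef
      have hw : ∀ n, x (w n) ≠ 0 := fun n => (wp n).2
      have hwt : ∀ n, tl (w (n + 1)) = hd (w n) := by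
        intro n
        have h1 : wp (n + 1) = f (wp n) := by
          show f^[n + 1] ⟨e0, he0⟩ = f (f^[n] ⟨e0, he0⟩)
          exact Function.iterate_succ_apply' f n _
        show tl (wp (n + 1)).1 = hd (wp n).1
        rw [h1]
        exact hfspec (wp n)
      set u : ℕ → V := fun n => tl (w n) with hu
      have husucc : ∀ n, u (n + 1) = hd (w n) := fun n => hwt n
      -- pigeonhole: some vertex repeats
      have hexd : ∃ d, 0 < d ∧ ∃ i, u (i + d) = u i := by
        have hninj : ¬ Function.Injective (fun k : Fin (Fintype.card V + 1) => u k.1) := by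
          intro hinj
          have := Fintype.card_le_of_injective _ hinj
          simp at this
        rw [Function.not_injective_iff] at hninj
        obtain ⟨a, b, hab, hne⟩ := hninj
        rcases Ne.lt_or_gt hne with hlt | hlt
        · refine ⟨b.1 - a.1, by omega, a.1, ?_⟩
          have : a.1 + (b.1 - a.1) = b.1 := by omega
          rw [this]
          exact hab.symm
        · refine ⟨a.1 - b.1, by omega, b.1, ?_⟩
          have : b.1 + (a.1 - b.1) = a.1 := by omega
          rw [this]
          exact hab
      set d : ℕ := Nat.find hexd with hdd
      obtain ⟨hd0, i, hui⟩ : 0 < d ∧ ∃ i, u (i + d) = u i := Nat.find_spec hexd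
      have hmin : ∀ d', 0 < d' → d' < d → ∀ j, u (j + d') ≠ u j := by
        intro d' h1 h2 j hj
        exact Nat.find_min hexd h2 ⟨h1, j, hj⟩
      have hdist : ∀ k l : ℕ, k < d → l < d → u (i + k) = u (i + l) → k = l := by
        intro k l hk hl heq
        rcases lt_trichotomy k l with h | h | h
        · exfalso
          refine hmin (l - k) (by omega) (by omega) (i + k) ?_
          have : i + k + (l - k) = i + l := by omega
          rw [this]
          exact heq.symm
        · exact h
        · exfalso
          refine hmin (k - l) (by omega) (by omega) (i + l) ?_
          have : i + l + (k - l) = i + k := by omega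
          rw [this]
          exact heq
      have hwinj : ∀ k l : ℕ, k < d → l < d → w (i + k) = w (i + l) → k = l := by
        intro k l hk hl heq
        apply hdist k l hk hl
        show tl (w (i + k)) = tl (w (i + l))
        rw [heq]
      -- the loop vector of the extracted cycle
      refine ⟨fun e => ∑ k : Fin d,
          if w (i + k.1) = e then (if 0 < x (w (i + k.1)) then (1:ℝ) else -1) else 0,
          ?_, ?_, w i, ?_⟩
      · refine ⟨d, fun k => u (i + k.1), fun k => w (i + k.1),
          fun k => if 0 < x (w (i + k.1)) then (1:ℝ) else -1, ?_, ?_, ?_, rfl⟩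
        · simpa using hui
        · intro k
          have hk1 : u (i + (k.1 + 1)) = hd (w (i + k.1)) := by
            have : i + (k.1 + 1) = (i + k.1) + 1 := by omega
            rw [this]
            exact husucc (i + k.1)
          by_cases hp : 0 < x (w (i + k.1))
          · refine Or.inl ⟨if_pos hp, ?_, ?_⟩
            · show src (w (i + k.1)) = u (i + (k.castSucc).1)
              simp only [Fin.coe_castSucc]
              rw [hu]
              simp [htl, hp]
            · show tgt (w (i + k.1)) = u (i + (k.succ).1)
              simp only [Fin.val_succ]
              rw [hk1, hhd]
              simp [hp]
          · refine Or.inr ⟨if_neg hp, ?_, ?_⟩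
            · show tgt (w (i + k.1)) = u (i + (k.castSucc).1)
              simp only [Fin.coe_castSucc]
              rw [hu]
              simp [htl, hp]
            · show src (w (i + k.1)) = u (i + (k.succ).1)
              simp only [Fin.val_succ]
              rw [hk1, hhd]
              simp [hp]
        · intro k
          exact hsupp _ (hw _)
      · intro e he
        by_contra hxe
        apply he
        refine Finset.sum_eq_zero fun k _ => ?_
        rw [if_neg]
        intro h
        exact hw (i + k.1) (by rw [h, hxe])
      · set k0 : Fin d := ⟨0, hd0⟩ with hk0
        have hiff : ∀ k : Fin d, (w (i + k.1) = w i) ↔ k = k0 := by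
          intro k
          constructor
          · intro h
            have : k.1 = 0 := by
              have := hwinj k.1 0 k.2 hd0 (by simpa using h)
              omega
            exact Fin.ext this
          · intro h
            rw [h]
            simp [hk0]
        have : (∑ k : Fin d,
            if w (i + k.1) = w i then (if 0 < x (w (i + k.1)) then (1:ℝ) else -1) else 0)
            = ∑ k : Fin d, if k = k0 then (if 0 < x (w (i + k.1)) then (1:ℝ) else -1) else 0 := by
          refine Finset.sum_congr rfl fun k _ => ?_
          rw [if_congr (hiff k) rfl rfl]
        show (∑ k : Fin d,
            if w (i + k.1) = w i then (if 0 < x (w (i + k.1)) then (1:ℝ) else -1) else 0) ≠ 0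
        rw [this, Finset.sum_ite_eq' Finset.univ k0]
        simp only [Finset.mem_univ, if_true]
        split_ifs <;> norm_num

end Aux

/-- For a connected planar circuit with connection matrix
`M = (1/2) B P A`, a row vector `ψ ∈ ℝ^F` satisfies `ψᵀ M = 0` iff `ψᵀ B` is a
linear combination of signed loop vectors of homogeneous cycles (cycles lying
entirely in `C` or entirely in `I = Cᶜ`).  The trivial all-ones vector of the
left kernel of `B` is accounted for since then `ψᵀ B = 0`. -/
theorem stmt10 {E V F : Type*} [Fintype E] [Fintype V] [Fintype F]
    [DecidableEq E] [DecidableEq V]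
    (src tgt : E → V)
    (hconn : ∀ u v : V, Relation.ReflTransGen
      (fun a b => ∃ e : E, (src e = a ∧ tgt e = b) ∨ (src e = b ∧ tgt e = a)) u v)
    (A : Matrix E V ℝ)
    (hA : ∀ e v, A e v = (if tgt e = v then 1 else 0) - (if src e = v then 1 else 0))
    (B : Matrix F E ℝ)
    (hBA : B * A = 0)
    (hexact : ∀ x : E → ℝ, B.mulVec x = 0 ↔ ∃ y : V → ℝ, x = A.mulVec y)
    (C : Finset E)
    (P : Matrix E E ℝ)
    (hP : P = Matrix.diagonal (fun e => if e ∈ C then (1 : ℝ) else -1))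
    (M : Matrix F V ℝ)
    (hM : M = (1/2 : ℝ) • (B * P * A)) :
    ∀ ψ : F → ℝ, Matrix.vecMul ψ M = 0 ↔
      Matrix.vecMul ψ B ∈ Submodule.span ℝ
        {b : E → ℝ | IsHomLoopVec src tgt (· ∈ C) b ∨
                     IsHomLoopVec src tgt (· ∉ C) b} := by
  classical
  intro ψ
  set x : E → ℝ := Matrix.vecMul ψ B with hx
  have hxA : Matrix.vecMul x A = 0 := by
    rw [hx, Matrix.vecMul_vecMul, hBA, Matrix.vecMul_zero]
  set z : E → ℝ := Matrix.vecMul x P with hz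
  have hzdef : ∀ e, z e = x e * (if e ∈ C then 1 else -1) := by
    intro e
    rw [hz, hP]
    exact Matrix.vecMul_diagonal _ _ _
  have hsmul : ∀ (N : Matrix F V ℝ) (c : ℝ),
      Matrix.vecMul ψ (c • N) = c • Matrix.vecMul ψ N := by
    intro N c
    funext j
    simp [Matrix.vecMul, dotProduct, Finset.mul_sum, mul_left_comm]
  have hψM : Matrix.vecMul ψ M = (1/2 : ℝ) • Matrix.vecMul z A := by
    rw [hM, hsmul]
    congr 1
    rw [hz, hx, Matrix.vecMul_vecMul, Matrix.vecMul_vecMul, Matrix.mul_assoc]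
  have hiff : Matrix.vecMul ψ M = 0 ↔ Matrix.vecMul z A = 0 := by
    rw [hψM, smul_eq_zero]
    norm_num
  rw [hiff]
  constructor
  · -- forward: decompose x into homogeneous flows and apply flow decomposition
    intro hzA
    set xC : E → ℝ := fun e => if e ∈ C then x e else 0 with hxC
    set xI : E → ℝ := fun e => if e ∈ C then 0 else x e with hxI
    have hCeq : xC = (1/2 : ℝ) • (x + z) := by
      funext e
      simp only [hxC, Pi.smul_apply, Pi.add_apply, smul_eq_mul, hzdef e]
      split_ifs <;> ring
    have hIeq : xI = (1/2 : ℝ) • (x - z) := by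
      funext e
      simp only [hxI, Pi.smul_apply, Pi.sub_apply, smul_eq_mul, hzdef e]
      split_ifs <;> ring
    have hCflow : Matrix.vecMul xC A = 0 := by
      rw [hCeq, Matrix.smul_vecMul, Matrix.add_vecMul, hxA, hzA]
      simp
    have hIflow : Matrix.vecMul xI A = 0 := by
      rw [hIeq, Matrix.smul_vecMul, Matrix.sub_vecMul, hxA, hzA]
      simp
    have hCsupp : ∀ e, xC e ≠ 0 → e ∈ C := by
      intro e he
      by_contra h
      simp [hxC, h] at he
    have hIsupp : ∀ e, xI e ≠ 0 → e ∉ C := by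
      intro e he h
      simp [hxI, h] at he
    have hCmem := flow_decomp src tgt A hA (· ∈ C) _ xC le_rfl hCsupp hCflow
    have hImem := flow_decomp src tgt A hA (· ∉ C) _ xI le_rfl hIsupp hIflow
    have hsub1 : {b : E → ℝ | IsHomLoopVec src tgt (· ∈ C) b} ⊆
        {b : E → ℝ | IsHomLoopVec src tgt (· ∈ C) b ∨ IsHomLoopVec src tgt (· ∉ C) b} :=
      fun b hb => Or.inl hb
    have hsub2 : {b : E → ℝ | IsHomLoopVec src tgt (· ∉ C) b} ⊆
        {b : E → ℝ | IsHomLoopVec src tgt (· ∈ C) b ∨ IsHomLoopVec src tgt (· ∉ C) b} :=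
      fun b hb => Or.inr hb
    have hxeq : x = xC + xI := by
      funext e
      simp only [hxC, hxI, Pi.add_apply]
      split_ifs <;> ring
    rw [hxeq]
    exact Submodule.add_mem _ (Submodule.span_mono hsub1 hCmem)
      (Submodule.span_mono hsub2 hImem)
  · -- backward: each generator satisfies bᵀ P A = 0
    intro hmem
    have main : ∀ y : E → ℝ, y ∈ Submodule.span ℝ
        {b : E → ℝ | IsHomLoopVec src tgt (· ∈ C) b ∨ IsHomLoopVec src tgt (· ∉ C) b} →
        Matrix.vecMul (Matrix.vecMul y P) A = 0 := by
      intro y hy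
      induction hy using Submodule.span_induction with
      | mem b hb =>
        rcases hb with hb | hb
        · have hsupp := homLoop_supp src tgt (· ∈ C) b hb
          have hbP : Matrix.vecMul b P = b := by
            funext e
            rw [hP, Matrix.vecMul_diagonal]
            by_cases hbe : b e = 0
            · simp [hbe]
            · rw [if_pos (hsupp e hbe)]
              ring
          rw [hbP]
          exact homLoop_flow src tgt A hA _ b hb
        · have hsupp := homLoop_supp src tgt (· ∉ C) b hb
          have hbP : Matrix.vecMul b P = -b := by
            funext e
            rw [hP, Matrix.vecMul_diagonal]
            by_cases hbe : b e = 0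
            · simp [hbe]
            · rw [if_neg (hsupp e hbe)]
              simp
          rw [hbP, Matrix.neg_vecMul, homLoop_flow src tgt A hA _ b hb]
          simp
      | zero => simp
      | add a b _ _ ha hb => rw [Matrix.add_vecMul, Matrix.add_vecMul, ha, hb, add_zero]
      | smul c a _ ha => rw [Matrix.smul_vecMul, Matrix.smul_vecMul, ha, smul_zero]
    exact main x hmem
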